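/- For every N ≥ 1, every n ≥ 1, every α ∈ O(A)^(n), and all tuples i, j ∈ {1,…,N}^{n−1}, the following identity holds in O(Rep_N(A)): (π(α))_{ij} = Σ_{s=1}^N α_{(s,i_1,…,i_{n−1}),(s,j_1,…,j_{n−1})}. -/

import Mathlib

noncomputable section

set_option maxHeartbeats 1000000
set_option synthInstance.maxHeartbeats 100000

open TensorProduct PiTensorProduct Equiv Function

variable (k : Type*) [Field k]
variable (A : Type*) [Ring A] [Algebra k A]

/-- The commutator subspace `[A,A] ⊆ A`. -/
def commSM : Submodule k A := Submodule.span k {x : A | ∃ a b : A, x = a * b - b * a}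

/-- `A_♮ = A/[A,A]`. -/
abbrev Anat := A ⧸ commSM k A

/-- The quotient map `A → A_♮`. -/
def qNat : A →ₗ[k] Anat k A := (commSM k A).mkQ

/-- The symmetrizing relation on the tensor algebra of `A_♮`. -/
def symRel : TensorAlgebra k (Anat k A) → TensorAlgebra k (Anat k A) → Prop :=
  fun u v => ∃ x y : TensorAlgebra k (Anat k A), u = x * y ∧ v = y * x

/-- The symmetric algebra `Sym(A_♮)`, realized as the quotient of the tensor algebra of `A_♮`
by the relations `xy = yx`. -/
abbrev SymA := RingQuot (symRel k A)

/-- The canonical inclusion `A_♮ → Sym(A_♮)`. -/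
def iotaSym : Anat k A →ₗ[k] SymA k A :=
  (RingQuot.mkAlgHom k (symRel k A)).toLinearMap ∘ₗ TensorAlgebra.ι k

/-- Tensor powers of `A`. -/
abbrev TP (n : ℕ) := PiTensorProduct k (fun _ : Fin n => A)

/-- The group algebra `k[S(n)]`, as the free `k`-module on `S(n)`. -/
abbrev GrpAlg (n : ℕ) := Equiv.Perm (Fin n) →₀ k

/-- The `n`-th graded component `O(A)^{(n)} = A^{⊗n} ⊗ Sym(A_♮) ⊗ k[S(n)]`. -/
abbrev OO (n : ℕ) := (TP k A n ⊗[k] SymA k A) ⊗[k] GrpAlg k n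

/-- The pure element `(a_1 ⊗ ⋯ ⊗ a_n) ⊗ f ⊗ u` of `O(A)^{(n)}`. -/
def el {n : ℕ} (a : Fin n → A) (f : SymA k A) (u : Equiv.Perm (Fin n)) : OO k A n :=
  (tprod k a ⊗ₜ[k] f) ⊗ₜ[k] Finsupp.single u 1

/-- Build a linear map out of `O(A)^{(n)}` from a family of linear maps on
`A^{⊗n} ⊗ Sym(A_♮)` indexed by permutations. -/
def build {n : ℕ} {M : Type*} [AddCommMonoid M] [Module k M]
    (F : Equiv.Perm (Fin n) → ((TP k A n ⊗[k] SymA k A) →ₗ[k] M)) :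
    OO k A n →ₗ[k] M :=
  TensorProduct.lift
    ((Finsupp.lift ((TP k A n ⊗[k] SymA k A) →ₗ[k] M) k (Equiv.Perm (Fin n)) F).flip)

/-- Splitting off the first tensor factor. -/
def splitFirst (M : Type*) [AddCommGroup M] [Module k M] (n : ℕ) :
    PiTensorProduct k (fun _ : Fin (n+1) => M) ≃ₗ[k]
      M ⊗[k] PiTensorProduct k (fun _ : Fin n => M) :=
  (PiTensorProduct.reindex k (fun _ : Fin (n+1) => M)
      ((finSumFinEquiv.trans (finCongr (by omega : 1 + n = n + 1))).symm :
        Fin (n+1) ≃ (Fin 1 ⊕ Fin n))).trans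
    ((PiTensorProduct.tmulEquiv k M).symm.trans
      (TensorProduct.congr (PiTensorProduct.subsingletonEquiv (0 : Fin 1))
        (LinearEquiv.refl k _)))

/-- Left multiplication into the `s`-th factor of a tensor power of `A`:
`a₀ ⊗ (b_1 ⊗ ⋯ ⊗ b_n) ↦ b_1 ⊗ ⋯ ⊗ (a₀ * b_s) ⊗ ⋯ ⊗ b_n`. -/
def mulInto : ∀ {n : ℕ}, Fin n → (A ⊗[k] TP k A n →ₗ[k] TP k A n)
  | 0, s => s.elim0
  | (m+1), s =>
    (PiTensorProduct.reindex k (fun _ : Fin (m+1) => A)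
        (((Fin.cycleRange s)⁻¹ : Equiv.Perm (Fin (m+1))) : Fin (m+1) ≃ Fin (m+1))).toLinearMap ∘ₗ
    (splitFirst k A m).symm.toLinearMap ∘ₗ
    LinearMap.rTensor (TP k A m) (LinearMap.mul' k A) ∘ₗ
    (TensorProduct.assoc k A A (TP k A m)).symm.toLinearMap ∘ₗ
    LinearMap.lTensor A
      (((PiTensorProduct.reindex k (fun _ : Fin (m+1) => A)
        ((Fin.cycleRange s : Equiv.Perm (Fin (m+1))) : Fin (m+1) ≃ Fin (m+1))).trans
        (splitFirst k A m)).toLinearMap)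

/-- The embedding `S(n) → S(n+1)`, `w ↦ id_1 × w`. -/
def embedSucc {n : ℕ} (w : Equiv.Perm (Fin n)) : Equiv.Perm (Fin (n + 1)) :=
  ((finSuccEquiv n).symm).permCongr (Equiv.optionCongr w)

/-- The canonical projection `S(n+1) → S(n)`, `u ↦ u_*`. -/
def projSucc {n : ℕ} (u : Equiv.Perm (Fin (n + 1))) : Equiv.Perm (Fin n) :=
  Equiv.removeNone (((finSuccEquiv n).symm.trans u).trans (finSuccEquiv n))

/-- Multiplication `A ⊗ Sym(A_♮) → Sym(A_♮)`, `a ⊗ f ↦ ā · f`. -/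
def mulSym : A ⊗[k] SymA k A →ₗ[k] SymA k A :=
  LinearMap.mul' k (SymA k A) ∘ₗ
    LinearMap.rTensor (SymA k A) (iotaSym k A ∘ₗ qNat k A)

/-- Tensoring with a fixed group-algebra basis vector: `x ↦ x ⊗ u`. -/
def withPerm {n : ℕ} (u : Equiv.Perm (Fin n)) :
    (TP k A n ⊗[k] SymA k A) →ₗ[k] OO k A n :=
  (TensorProduct.mk k (TP k A n ⊗[k] SymA k A) (GrpAlg k n)).flip (Finsupp.single u 1)

/-- The case `u(1) = 1` of `π`. -/
def piCaseOne {n : ℕ} (u : Equiv.Perm (Fin (n+1))) :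
    (TP k A (n+1) ⊗[k] SymA k A) →ₗ[k] OO k A n :=
  withPerm k A (projSucc u) ∘ₗ
  LinearMap.lTensor (TP k A n) (mulSym k A) ∘ₗ
  (TensorProduct.leftComm k A (TP k A n) (SymA k A)).toLinearMap ∘ₗ
  (TensorProduct.assoc k A (TP k A n) (SymA k A)).toLinearMap ∘ₗ
  LinearMap.rTensor (SymA k A) (splitFirst k A n).toLinearMap

/-- The case `u(1) = s > 1` of `π`. -/
def piCaseTwo {n : ℕ} (u : Equiv.Perm (Fin (n+1))) (h : u 0 ≠ 0) :
    (TP k A (n+1) ⊗[k] SymA k A) →ₗ[k] OO k A n :=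
  withPerm k A (projSucc u) ∘ₗ
  LinearMap.rTensor (SymA k A) (mulInto k A ((u 0).pred h)) ∘ₗ
  LinearMap.rTensor (SymA k A) (splitFirst k A n).toLinearMap

/-- The map `π : O(A)^{(n+1)} → O(A)^{(n)}`. -/
def piMap {n : ℕ} : OO k A (n+1) →ₗ[k] OO k A n :=
  build k A (fun u => if h : u 0 = 0 then piCaseOne k A u else piCaseTwo k A u h)

/-- Prepending a tensor factor `1`. -/
def consOne {n : ℕ} : TP k A n →ₗ[k] TP k A (n+1) :=
  (splitFirst k A n).symm.toLinearMap ∘ₗ TensorProduct.mk k A (TP k A n) 1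

/-- The map `1̂ : O(A)^{(n)} → O(A)^{(n+1)}`. -/
def oneHat {n : ℕ} : OO k A n →ₗ[k] OO k A (n+1) :=
  build k A (fun u =>
    withPerm k A (embedSucc u) ∘ₗ LinearMap.rTensor (SymA k A) (consOne k A))

/-- The left action of `σ ∈ S(n)` on `O(A)^{(n)}`:
`σ·((a_1⊗…⊗a_n)⊗f⊗τ) = (a_{σ⁻¹(1)}⊗…⊗a_{σ⁻¹(n)})⊗f⊗(στ)`. -/
def lAct {n : ℕ} (σ : Equiv.Perm (Fin n)) : OO k A n →ₗ[k] OO k A n :=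
  build k A (fun u =>
    withPerm k A (σ * u) ∘ₗ
      LinearMap.rTensor (SymA k A)
        (PiTensorProduct.reindex k (fun _ : Fin n => A)
          (σ : Fin n ≃ Fin n)).toLinearMap)

/-- The right action of `σ ∈ S(n)` on `O(A)^{(n)}`:
`((a_1⊗…⊗a_n)⊗f⊗τ)·σ = (a_1⊗…⊗a_n)⊗f⊗(τσ)`. -/
def rAct {n : ℕ} (σ : Equiv.Perm (Fin n)) : OO k A n →ₗ[k] OO k A n :=
  LinearMap.lTensor (TP k A n ⊗[k] SymA k A)
    (Finsupp.lmapDomain k k (fun u : Equiv.Perm (Fin n) => u * σ))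

end

noncomputable section

set_option maxHeartbeats 1000000
set_option synthInstance.maxHeartbeats 400000

open MvPolynomial

variable (k : Type*) [Field k]
variable (A : Type*) [Ring A] [Algebra k A]
variable (N : ℕ)

def repRel : Set (MvPolynomial (A × Fin N × Fin N) k) :=
  {p | (∃ (a b : A) (i j : Fin N), p = X (a + b, i, j) - X (a, i, j) - X (b, i, j)) ∨
       (∃ (c : k) (a : A) (i j : Fin N), p = X (c • a, i, j) - MvPolynomial.C c * X (a, i, j)) ∨
       (∃ (a b : A) (i j : Fin N),
          p = X (a * b, i, j) - ∑ s : Fin N, X (a, i, s) * X (b, s, j)) ∨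
       (∃ i j : Fin N, p = X ((1 : A), i, j) - if i = j then 1 else 0)}

def RepAlg := MvPolynomial (A × Fin N × Fin N) k ⧸ Ideal.span (repRel k A N)

instance : CommRing (RepAlg k A N) :=
  inferInstanceAs (CommRing (MvPolynomial (A × Fin N × Fin N) k ⧸ Ideal.span (repRel k A N)))

instance : Algebra k (RepAlg k A N) :=
  inferInstanceAs (Algebra k (MvPolynomial (A × Fin N × Fin N) k ⧸ Ideal.span (repRel k A N)))

def genL (i j : Fin N) : A →ₗ[k] RepAlg k A N where
  toFun a := Ideal.Quotient.mkₐ k (Ideal.span (repRel k A N)) (X (a, i, j))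
  map_add' a b := by
    have h : (X (a + b, i, j) - (X (a, i, j) + X (b, i, j)) : MvPolynomial (A × Fin N × Fin N) k)
        ∈ Ideal.span (repRel k A N) :=
      Ideal.subset_span (Or.inl ⟨a, b, i, j, by ring⟩)
    show Ideal.Quotient.mkₐ k _ (X (a + b, i, j)) =
      Ideal.Quotient.mkₐ k _ (X (a, i, j)) + Ideal.Quotient.mkₐ k _ (X (b, i, j))
    exact (Ideal.Quotient.eq.mpr h).trans (map_add (Ideal.Quotient.mk _) _ _)
  map_smul' c a := by
    have h : (X (c • a, i, j) - MvPolynomial.C c * X (a, i, j) :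
        MvPolynomial (A × Fin N × Fin N) k) ∈ Ideal.span (repRel k A N) :=
      Ideal.subset_span (Or.inr (Or.inl ⟨c, a, i, j, by ring⟩))
    show Ideal.Quotient.mkₐ k _ (X (c • a, i, j)) = c • Ideal.Quotient.mkₐ k _ (X (a, i, j))
    exact (Ideal.Quotient.eq.mpr h).trans
      ((congrArg (Ideal.Quotient.mk _) (MvPolynomial.smul_eq_C_mul _ c).symm).trans
        (map_smul (Ideal.Quotient.mkₐ k (Ideal.span (repRel k A N))) c _))

/-- The trace `a ↦ Σ_s a_{ss}`, as a linear map `A → O(Rep_N(A))`. -/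
def trA : A →ₗ[k] RepAlg k A N := ∑ s : Fin N, genL k A N s s

lemma genL_mul (a b : A) (i j : Fin N) :
    genL k A N i j (a * b) =
      ∑ s : Fin N, Ideal.Quotient.mk (Ideal.span (repRel k A N)) (X (a, i, s) * X (b, s, j)) := by
  have h : (X (a * b, i, j) - ∑ s : Fin N, X (a, i, s) * X (b, s, j) :
      MvPolynomial (A × Fin N × Fin N) k) ∈ Ideal.span (repRel k A N) :=
    Ideal.subset_span (Or.inr (Or.inr (Or.inl ⟨a, b, i, j, rfl⟩)))
  have h2 := Ideal.Quotient.eq.mpr h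
  exact h2.trans (map_sum _ _ _)

lemma trA_mul_comm (a b : A) : trA k A N (a * b) = trA k A N (b * a) := by
  have e1 : trA k A N (a * b) = ∑ s : Fin N, ∑ t : Fin N,
      Ideal.Quotient.mk (Ideal.span (repRel k A N)) (X (a, s, t) * X (b, t, s)) := by
    simp only [trA, LinearMap.sum_apply]
    exact Finset.sum_congr rfl fun s _ => genL_mul k A N a b s s
  have e2 : trA k A N (b * a) = ∑ s : Fin N, ∑ t : Fin N,
      Ideal.Quotient.mk (Ideal.span (repRel k A N)) (X (b, s, t) * X (a, t, s)) := by
    simp only [trA, LinearMap.sum_apply]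
    exact Finset.sum_congr rfl fun s _ => genL_mul k A N b a s s
  rw [e1, e2, Finset.sum_comm]
  exact Finset.sum_congr rfl fun s _ => Finset.sum_congr rfl fun t _ => by rw [mul_comm]

/-- The trace descends to `A_♮`. -/
def trNat : Anat k A →ₗ[k] RepAlg k A N :=
  Submodule.liftQ (commSM k A) (trA k A N) (Submodule.span_le.mpr (by
    rintro x ⟨a, b, rfl⟩
    simp only [SetLike.mem_coe, LinearMap.mem_ker, map_sub, trA_mul_comm k A N a b, sub_self]))

/-- The multiplicative extension of the trace to `Sym(A_♮)`. -/
def trSym : SymA k A →ₐ[k] RepAlg k A N :=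
  RingQuot.liftAlgHom k ⟨TensorAlgebra.lift k (trNat k A N), by
    rintro x y ⟨u, v, rfl, rfl⟩
    simp [mul_comm]⟩

/-- The multilinear map `a ↦ ∏_t (a_t)_{i_{u⁻¹(t)}, j_t}`. -/
def prodML {n : ℕ} (u : Equiv.Perm (Fin n)) (i j : Fin n → Fin N) :
    MultilinearMap k (fun _ : Fin n => A) (RepAlg k A N) :=
  (MultilinearMap.mkPiAlgebra k (Fin n) (RepAlg k A N)).compLinearMap
    (fun t => genL k A N (i (u⁻¹ t)) (j t))

/-- The pairing `α ↦ α_{ij} : O(A)^{(n)} → O(Rep_N(A))`,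
`((a_1⊗…⊗a_n)⊗(f_1⋯f_m)⊗u)_{ij} = ∏_t (a_t)_{i_{u⁻¹(t)} j_t} · tr(f_1)⋯tr(f_m)`. -/
def pairRep {n : ℕ} (i j : Fin n → Fin N) : OO k A n →ₗ[k] RepAlg k A N :=
  build k A (fun u =>
    TensorProduct.lift
      ((LinearMap.mul k (RepAlg k A N)).compl₁₂
        (PiTensorProduct.lift (prodML k A N u i j)) (trSym k A N).toLinearMap))

/-- The subspace `R_N(A) ⊆ O(A)^{(n)}` of elements vanishing in the `N`-dimensional
representations. -/
def RN (n : ℕ) : Submodule k (OO k A n) :=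
  ⨅ (i : Fin n → Fin N) (j : Fin n → Fin N), LinearMap.ker (pairRep k A N i j)

end

/-!
Statement 8: for every `N ≥ 1`, `n ≥ 1`, every `α ∈ O(A)^{(n)}` and all tuples
`i, j ∈ {1,…,N}^{n-1}`, one has in `O(Rep_N(A))`:
`(π(α))_{ij} = Σ_{s=1}^N α_{(s,i_1,…,i_{n-1}),(s,j_1,…,j_{n-1})}`.
-/

set_option maxHeartbeats 1000000
set_option synthInstance.maxHeartbeats 400000

section Helpers

open TensorProduct PiTensorProduct Equiv Function

variable (k : Type*) [Field k]
variable (A : Type*) [Ring A] [Algebra k A]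

lemma build_tmul {n : ℕ} {M : Type*} [AddCommMonoid M] [Module k M]
    (F : Equiv.Perm (Fin n) → ((TP k A n ⊗[k] SymA k A) →ₗ[k] M))
    (y : TP k A n ⊗[k] SymA k A) (u : Equiv.Perm (Fin n)) :
    build k A F (y ⊗ₜ[k] Finsupp.single u 1) = F u y := by
  simp [build]

lemma splitFirst_tprod {n : ℕ} (a : Fin (n+1) → A) :
    splitFirst k A n (tprod k a) = a 0 ⊗ₜ[k] tprod k (fun t => a t.succ) := by
  simp only [splitFirst, LinearEquiv.trans_apply, PiTensorProduct.reindex_tprod]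
  rw [show ((fun t => a (((finSumFinEquiv.trans (finCongr (by omega : 1 + n = n + 1))).symm :
      Fin (n+1) ≃ (Fin 1 ⊕ Fin n)).symm t)) : Fin 1 ⊕ Fin n → A) =
      Sum.elim (fun _ : Fin 1 => a 0) (fun t : Fin n => a t.succ) from ?_]
  · rw [PiTensorProduct.tmulEquiv_symm_apply]
    simp [TensorProduct.congr]
  · funext t
    cases t with
    | inl x =>
      simp only [Fin.fin_one_eq_zero x, finSumFinEquiv, Sum.elim_inl]
      congr 1
    | inr x =>
      simp [finSumFinEquiv, Fin.natAdd, Fin.succ, Fin.ext_iff, Nat.add_comm]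

end Helpers

section Helpers2

open TensorProduct PiTensorProduct Equiv Function

variable (k : Type*) [Field k]
variable (A : Type*) [Ring A] [Algebra k A]
variable (N : ℕ)

lemma splitFirst_symm_tmul {n : ℕ} (x : A) (g : Fin n → A) :
    (splitFirst k A n).symm (x ⊗ₜ[k] PiTensorProduct.tprod k g) = PiTensorProduct.tprod k (Fin.cons x g) := by
  rw [LinearEquiv.symm_apply_eq, splitFirst_tprod]
  simp

lemma pairRep_el {n : ℕ} (i j : Fin n → Fin N) (a : Fin n → A) (f : SymA k A)
    (u : Equiv.Perm (Fin n)) :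
    pairRep k A N i j (el k A a f u) =
      (∏ t : Fin n, genL k A N (i (u⁻¹ t)) (j t) (a t)) * trSym k A N f := by
  simp [pairRep, el, build_tmul, prodML]

lemma trSym_iota (x : Anat k A) : trSym k A N (iotaSym k A x) = trNat k A N x := by
  simp [trSym, iotaSym, RingQuot.liftAlgHom_mkAlgHom_apply]

lemma trNat_qNat (a : A) : trNat k A N (qNat k A a) = trA k A N a := rfl

lemma genL_mul' (a b : A) (i j : Fin N) :
    genL k A N i j (a * b) = ∑ s : Fin N, genL k A N i s a * genL k A N s j b := by
  rw [genL_mul]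
  refine Finset.sum_congr rfl fun s _ => ?_
  rw [_root_.map_mul]
  rfl

lemma mulSym_tmul (a : A) (f : SymA k A) :
    mulSym k A (a ⊗ₜ[k] f) = iotaSym k A (qNat k A a) * f := by
  simp [mulSym]

lemma mulInto_tmul {m : ℕ} (s : Fin (m+1)) (a₀ : A) (b : Fin (m+1) → A) :
    mulInto k A s (a₀ ⊗ₜ[k] tprod k b) = tprod k (Function.update b s (a₀ * b s)) := by
  have key : ∀ y : Fin (m+1), (Fin.cons (a₀ * b s)
      (fun t : Fin m => b ((Fin.cycleRange s).symm t.succ)) : Fin (m+1) → A) y =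
      Function.update b s (a₀ * b s) ((Fin.cycleRange s).symm y) := by
    intro y
    induction y using Fin.cases with
    | zero =>
      rw [Fin.cycleRange_symm_zero, Function.update_self, Fin.cons_zero]
    | succ t =>
      have hne : (Fin.cycleRange s).symm t.succ ≠ s := by
        intro h
        have h2 : t.succ = Fin.cycleRange s s := by
          rw [← congrArg (Fin.cycleRange s) h, Equiv.apply_symm_apply]
        rw [Fin.cycleRange_self] at h2
        exact (Fin.succ_ne_zero t) h2
      rw [Fin.cons_succ, Function.update_of_ne hne]
  simp only [mulInto, LinearMap.comp_apply, LinearMap.lTensor_tmul, LinearEquiv.coe_coe,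
    LinearEquiv.trans_apply]
  rw [PiTensorProduct.reindex_tprod, splitFirst_tprod]
  simp only [comp_apply, TensorProduct.assoc_symm_tmul, LinearMap.rTensor_tmul,
    LinearMap.mul'_apply, Fin.cycleRange_symm_zero]
  rw [splitFirst_symm_tmul, PiTensorProduct.reindex_tprod]
  congr 1
  funext t
  rw [show ((Equiv.symm ((Fin.cycleRange s : Equiv.Perm (Fin (m+1)))⁻¹)) t)
      = Fin.cycleRange s t from rfl]
  rw [key (Fin.cycleRange s t), Equiv.symm_apply_apply]

end Helpers2

section Helpers3

open TensorProduct PiTensorProduct Equiv Function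

variable (k : Type*) [Field k]
variable (A : Type*) [Ring A] [Algebra k A]
variable (N : ℕ)

lemma projSucc_succ_of_ne {n : ℕ} (u : Equiv.Perm (Fin (n+1))) (t : Fin n)
    (h : u t.succ ≠ 0) : (projSucc u t).succ = u t.succ := by
  obtain ⟨p, hp⟩ : ∃ p : Fin n, u t.succ = p.succ :=
    ⟨(u t.succ).pred h, (Fin.succ_pred _ h).symm⟩
  set v := ((finSuccEquiv n).symm.trans u).trans (finSuccEquiv n) with hv
  have hvt : v (some t) = some p := by
    simp only [hv, Equiv.trans_apply, finSuccEquiv_symm_some]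
    rw [hp, finSuccEquiv_succ]
  have h1 := Equiv.removeNone_some v ⟨_, hvt⟩
  rw [hvt] at h1
  have h2 : Equiv.removeNone v t = p := Option.some_injective _ h1
  rw [show projSucc u t = Equiv.removeNone v t from rfl, h2, hp]

lemma projSucc_succ_of_eq {n : ℕ} (u : Equiv.Perm (Fin (n+1))) (t : Fin n)
    (h : u t.succ = 0) : (projSucc u t).succ = u 0 := by
  have h0 : u 0 ≠ 0 := by
    intro h0
    exact Fin.succ_ne_zero t (u.injective (h.trans h0.symm))
  obtain ⟨p, hp⟩ : ∃ p : Fin n, u 0 = p.succ :=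
    ⟨(u 0).pred h0, (Fin.succ_pred _ h0).symm⟩
  set v := ((finSuccEquiv n).symm.trans u).trans (finSuccEquiv n) with hv
  have hvt : v (some t) = none := by
    simp only [hv, Equiv.trans_apply, finSuccEquiv_symm_some]
    rw [h, finSuccEquiv_zero]
  have hvn : v none = some p := by
    simp only [hv, Equiv.trans_apply, finSuccEquiv_symm_none]
    rw [hp, finSuccEquiv_succ]
  have h1 := Equiv.removeNone_none v hvt
  rw [hvn] at h1
  have h2 : Equiv.removeNone v t = p := Option.some_injective _ h1
  rw [show projSucc u t = Equiv.removeNone v t from rfl, h2, hp]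

lemma projSucc_inv {n : ℕ} (u : Equiv.Perm (Fin (n+1))) :
    (projSucc u)⁻¹ = projSucc u⁻¹ := by
  show (projSucc u).symm = projSucc u⁻¹
  rw [projSucc, Equiv.removeNone_symm]
  exact congrArg Equiv.removeNone (Equiv.ext fun x => rfl)

end Helpers3

section Helpers4

open TensorProduct PiTensorProduct Equiv Function

variable (k : Type*) [Field k]
variable (A : Type*) [Ring A] [Algebra k A]

lemma piCaseOne_tmul {n : ℕ} (u : Equiv.Perm (Fin (n+1))) (a : Fin (n+1) → A)
    (f : SymA k A) :
    piCaseOne k A u (tprod k a ⊗ₜ[k] f) =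
      el k A (fun t => a t.succ) (iotaSym k A (qNat k A (a 0)) * f) (projSucc u) := by
  simp only [piCaseOne, LinearMap.comp_apply, LinearMap.rTensor_tmul, LinearEquiv.coe_coe]
  rw [splitFirst_tprod]
  simp only [TensorProduct.assoc_tmul, TensorProduct.leftComm_tmul,
    LinearMap.lTensor_tmul]
  rw [mulSym_tmul]
  rfl

lemma piCaseTwo_tmul {n : ℕ} (u : Equiv.Perm (Fin (n+1))) (h : u 0 ≠ 0)
    (a : Fin (n+1) → A) (f : SymA k A) :
    piCaseTwo k A u h (tprod k a ⊗ₜ[k] f) =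
      el k A (Function.update (fun t => a t.succ) ((u 0).pred h)
        (a 0 * a ((u 0).pred h).succ)) f (projSucc u) := by
  cases n with
  | zero => exact absurd (Fin.fin_one_eq_zero _) h
  | succ m =>
    simp only [piCaseTwo, LinearMap.comp_apply, LinearMap.rTensor_tmul, LinearEquiv.coe_coe]
    rw [splitFirst_tprod, mulInto_tmul]
    rfl

lemma piMap_el {n : ℕ} (a : Fin (n+1) → A) (f : SymA k A) (u : Equiv.Perm (Fin (n+1))) :
    piMap k A (el k A a f u) =
      if h : u 0 = 0 then
        el k A (fun t => a t.succ) (iotaSym k A (qNat k A (a 0)) * f) (projSucc u)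
      else
        el k A (Function.update (fun t => a t.succ) ((u 0).pred h)
          (a 0 * a ((u 0).pred h).succ)) f (projSucc u) := by
  rw [piMap, el, build_tmul]
  split_ifs with h
  · rw [piCaseOne_tmul]
  · rw [piCaseTwo_tmul]

end Helpers4

section Helpers5

open TensorProduct PiTensorProduct Equiv Function

variable (k : Type*) [Field k]
variable (A : Type*) [Ring A] [Algebra k A]
variable (N : ℕ)

lemma perm_apply_inv_self' {α : Type*} (f : Equiv.Perm α) (x : α) : f (f⁻¹ x) = x :=
  f.apply_symm_apply x

lemma perm_inv_apply_self' {α : Type*} (f : Equiv.Perm α) (x : α) : f⁻¹ (f x) = x :=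
  f.symm_apply_apply x

lemma trA_apply (a : A) : trA k A N a = ∑ s : Fin N, genL k A N s s a := by
  simp [trA]

lemma key_el {n : ℕ} (i j : Fin n → Fin N) (a : Fin (n+1) → A) (f : SymA k A)
    (u : Equiv.Perm (Fin (n+1))) :
    pairRep k A N i j (piMap k A (el k A a f u)) =
      ∑ s : Fin N, pairRep k A N (Fin.cons s i) (Fin.cons s j) (el k A a f u) := by
  rw [piMap_el]
  split_ifs with h
  · -- case u 0 = 0
    rw [pairRep_el, _root_.map_mul, trSym_iota, trNat_qNat]
    have hinv0 : u⁻¹ 0 = 0 := Equiv.Perm.inv_eq_iff_eq.mpr h.symm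
    have hsum : ∀ s : Fin N, pairRep k A N (Fin.cons s i) (Fin.cons s j) (el k A a f u) =
        genL k A N s s (a 0) *
          ((∏ t : Fin n, genL k A N (i ((projSucc u)⁻¹ t)) (j t) (a t.succ)) *
            trSym k A N f) := by
      intro s
      rw [pairRep_el, Fin.prod_univ_succ, hinv0, Fin.cons_zero, Fin.cons_zero]
      rw [Finset.prod_congr rfl (fun t _ => ?_), mul_assoc]
      have hne : u⁻¹ t.succ ≠ 0 := by
        intro hh
        apply Fin.succ_ne_zero t
        have h2 := congrArg u hh
        rw [perm_apply_inv_self', h] at h2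
        exact h2
      rw [projSucc_inv,
        show u⁻¹ t.succ = (projSucc u⁻¹ t).succ from (projSucc_succ_of_ne u⁻¹ t hne).symm,
        Fin.cons_succ, Fin.cons_succ]
    rw [Finset.sum_congr rfl (fun s _ => hsum s), ← Finset.sum_mul, ← trA_apply]
    ring
  · -- case u 0 ≠ 0
    rw [pairRep_el, projSucc_inv]
    have hq : u⁻¹ 0 ≠ 0 := by
      intro hh
      apply h
      have h2 := congrArg u hh
      rw [perm_apply_inv_self'] at h2
      exact h2.symm
    set p := (u 0).pred h with hp
    set q := (u⁻¹ 0).pred hq with hqq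
    have hps : p.succ = u 0 := Fin.succ_pred _ h
    have hqs : q.succ = u⁻¹ 0 := Fin.succ_pred _ hq
    have hup : u⁻¹ p.succ = 0 := by rw [hps, perm_inv_apply_self']
    have hq' : projSucc u⁻¹ p = q := by
      apply Fin.succ_injective
      rw [projSucc_succ_of_eq u⁻¹ p hup, hqs]
    set b : Fin n → A := Function.update (fun t => a t.succ) p (a 0 * a p.succ) with hb
    set C : RepAlg k A N :=
      ∏ t ∈ Finset.univ.erase p, genL k A N (i (projSucc u⁻¹ t)) (j t) (b t) with hC
    have hL : (∏ t : Fin n, genL k A N (i (projSucc u⁻¹ t)) (j t) (b t)) =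
        genL k A N (i q) (j p) (a 0 * a p.succ) * C := by
      rw [← Finset.mul_prod_erase Finset.univ _ (Finset.mem_univ p), hq', hb]
      rw [Function.update_self]
    have hsum : ∀ s : Fin N, pairRep k A N (Fin.cons s i) (Fin.cons s j) (el k A a f u) =
        (genL k A N (i q) s (a 0) * genL k A N s (j p) (a p.succ)) * (C * trSym k A N f) := by
      intro s
      rw [pairRep_el, Fin.prod_univ_succ, ← hqs, Fin.cons_succ, Fin.cons_zero]
      have hprod : (∏ t : Fin n, genL k A N ((Fin.cons s i : Fin (n+1) → Fin N) (u⁻¹ t.succ))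
          ((Fin.cons s j : Fin (n+1) → Fin N) t.succ) (a t.succ)) =
          genL k A N s (j p) (a p.succ) * C := by
        rw [← Finset.mul_prod_erase Finset.univ _ (Finset.mem_univ p), hup, Fin.cons_zero,
          Fin.cons_succ]
        congr 1
        refine Finset.prod_congr rfl (fun t ht => ?_)
        have htp : t ≠ p := (Finset.mem_erase.mp ht).1
        have hnt : u⁻¹ t.succ ≠ 0 := by
          intro hh
          apply htp
          apply Fin.succ_injective
          rw [hps]
          have h2 := congrArg u hh
          rwa [perm_apply_inv_self'] at h2
        rw [show u⁻¹ t.succ = (projSucc u⁻¹ t).succ from (projSucc_succ_of_ne u⁻¹ t hnt).symm,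
          Fin.cons_succ, Fin.cons_succ, hb, Function.update_of_ne htp]
      rw [hprod]
      ring
    rw [Finset.sum_congr rfl (fun s _ => hsum s), ← Finset.sum_mul, ← genL_mul', hL]
    ring

end Helpers5

theorem pairRep_piMap (k : Type*) [Field k] [IsAlgClosed k] [CharZero k]
    (A : Type*) [Ring A] [Algebra k A] (N : ℕ) (hN : 1 ≤ N)
    (n : ℕ) (α : OO k A (n + 1)) (i j : Fin n → Fin N) :
    pairRep k A N i j (piMap k A α) =
      ∑ s : Fin N, pairRep k A N (Fin.cons s i) (Fin.cons s j) α := by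
  induction α using TensorProduct.induction_on with
  | zero => simp
  | add x y hx hy => simp only [map_add, hx, hy, Finset.sum_add_distrib]
  | tmul y g =>
    induction g using Finsupp.induction_linear with
    | zero => simp [TensorProduct.tmul_zero]
    | add g1 g2 h1 h2 =>
      simp only [TensorProduct.tmul_add, map_add, h1, h2, Finset.sum_add_distrib]
    | single u c =>
      have hc : (Finsupp.single u c : GrpAlg k (n+1)) = c • Finsupp.single u 1 := by
        rw [Finsupp.smul_single, smul_eq_mul, mul_one]
      rw [hc, TensorProduct.tmul_smul, map_smul, map_smul]
      simp only [map_smul, ← Finset.smul_sum]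
      congr 1
      induction y using TensorProduct.induction_on with
      | zero => simp [TensorProduct.zero_tmul]
      | add y1 y2 h1 h2 =>
        simp only [TensorProduct.add_tmul, map_add, h1, h2, Finset.sum_add_distrib]
      | tmul x f =>
        induction x using PiTensorProduct.induction_on with
        | smul_tprod r a =>
          rw [show ((r • PiTensorProduct.tprod k a) ⊗ₜ[k] f) ⊗ₜ[k]
                (Finsupp.single u 1 : GrpAlg k (n+1)) = r • el k A a f u from by
              rw [el, TensorProduct.smul_tmul', TensorProduct.smul_tmul']]
          rw [map_smul, map_smul]
          simp only [map_smul, ← Finset.smul_sum]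
          congr 1
          exact key_el k A N i j a f u
        | add x1 x2 h1 h2 =>
          simp only [TensorProduct.add_tmul, map_add, h1, h2, Finset.sum_add_distrib]
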